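/- Under the hypotheses of the main interlacing theorem (f·g = D·p + (x−A)·q, f > 0 on (c,d), interlacing zeros of p and q, g monic of degree n with real zeros, g and p coprime), if A > x_n (A exceeds the largest zero of p), then the zeros y_1 < ... < y_n of g satisfy y_1 < x_1 < y_2 < x_2 < ... < x_{n−1} < y_n < x_n < A. -/
import Mathlib
open Polynomial Finset

lemma aux_sign_prod {m : ℕ} (w : Fin m → ℝ) (t : ℝ) (h : ∀ j, t ≠ w j) :
    0 < (-1 : ℝ) ^ (Finset.univ.filter (fun j => t < w j)).card * ∏ j, (t - w j) := by
  classical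
  rw [← Finset.prod_filter_mul_prod_filter_not Finset.univ (fun j => t < w j), ← mul_assoc,
    ← Finset.prod_const, ← Finset.prod_mul_distrib]
  apply mul_pos
  · apply Finset.prod_pos; intro j hj
    simp only [Finset.mem_filter] at hj; linarith [hj.2]
  · apply Finset.prod_pos; intro j hj
    simp only [Finset.mem_filter, Finset.mem_univ, true_and] at hj
    rcases lt_or_gt_of_ne (h j) with h1 | h1
    · exact absurd h1 hj
    · linarith

lemma aux_chain (f : ℕ → ℕ) (n : ℕ) (hdec : ∀ i, i + 1 < n → f (i+1) < f i) :
    ∀ i j, i ≤ j → j < n → f j + (j - i) ≤ f i := by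
  intro i j hij hj
  induction j with
  | zero => simp [Nat.le_zero.mp hij]
  | succ k ih =>
    rcases Nat.eq_or_lt_of_le hij with h | h
    · simp [← h]
    · have hk : i ≤ k := Nat.lt_succ_iff.mp h
      have h1 := ih hk (Nat.lt_of_succ_lt hj)
      have h2 := hdec k hj
      omega

lemma aux_signs {a b : ℕ} {v : ℝ} (h1 : 0 < (-1:ℝ)^a * v) (h2 : 0 < (-1:ℝ)^b * v) :
    a % 2 = b % 2 := by
  rcases Nat.even_or_odd a with ha | ha <;> rcases Nat.even_or_odd b with hb | hb <;>
    simp only [ha.neg_one_pow, hb.neg_one_pow, Odd.neg_one_pow] at h1 h2 <;>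
    first
      | (rw [Nat.even_iff] at ha hb; omega)
      | (rw [Nat.odd_iff] at ha hb; omega)
      | linarith

theorem stmt4 (n : ℕ) (p q g D : Polynomial ℝ) (f : ℝ → ℝ) (c d A : ℝ)
    (x : Fin n → ℝ) (z : Fin (n + 1) → ℝ) (y : Fin n → ℝ)
    (hx : StrictMono x) (hz : StrictMono z) (hy : Monotone y)
    (hp : p = ∏ i, (X - C (x i)))
    (hq : q = ∏ i, (X - C (z i)))
    (hg : g = ∏ i, (X - C (y i)))
    (hxcd : ∀ i, x i ∈ Set.Ioo c d) (hzcd : ∀ i, z i ∈ Set.Ioo c d)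
    (hycd : ∀ i, y i ∈ Set.Ioo c d) (hAcd : A ∈ Set.Ioo c d)
    (hint : ∀ i : Fin n, z i.castSucc < x i ∧ x i < z i.succ)
    (hf : ∀ t ∈ Set.Ioo c d, 0 < f t)
    (hid : ∀ t : ℝ, f t * g.eval t = D.eval t * p.eval t + (t - A) * q.eval t)
    (hpA : p.eval A ≠ 0) (hgA : g.eval A ≠ 0)
    (hxA : ∀ i : Fin n, x i < A) :
    (∀ i : Fin n, y i < x i) ∧
      ∀ i : Fin n, ∀ h : (i : ℕ) + 1 < n, x i < y ⟨(i : ℕ) + 1, h⟩ := by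
  classical
  have hpe : ∀ t, p.eval t = ∏ i, (t - x i) := by intro t; simp [hp, eval_prod]
  have hqe : ∀ t, q.eval t = ∏ i, (t - z i) := by intro t; simp [hq, eval_prod]
  have hge : ∀ t, g.eval t = ∏ i, (t - y i) := by intro t; simp [hg, eval_prod]
  -- x i ≠ z j
  have hxz : ∀ i : Fin n, ∀ j : Fin (n+1), x i ≠ z j := by
    intro i j
    rcases lt_or_ge (j:ℕ) ((i:ℕ)+1) with h | h
    · have h1 : z j ≤ z i.castSucc := hz.monotone (by rw [Fin.le_def]; simp; omega)
      have := (hint i).1; exact (lt_of_le_of_lt h1 this).ne'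
    · have h1 : z i.succ ≤ z j := hz.monotone (by rw [Fin.le_def]; simp; omega)
      exact (lt_of_lt_of_le (hint i).2 h1).ne
  -- count of z's above x i
  have hfq : ∀ i : Fin n,
      (Finset.univ.filter (fun j : Fin (n+1) => x i < z j)).card = n - (i:ℕ) := by
    intro i
    have he : (Finset.univ.filter (fun j : Fin (n+1) => x i < z j)) = Finset.Ici i.succ := by
      ext j
      simp only [Finset.mem_filter, Finset.mem_univ, true_and, Finset.mem_Ici, Fin.le_def,
        Fin.val_succ]
      constructor
      · intro h; by_contra hc; push_neg at hc
        have h1 : z j ≤ z i.castSucc := hz.monotone (by rw [Fin.le_def]; simp; omega)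
        linarith [(hint i).1]
      · intro h
        have h1 : z i.succ ≤ z j := hz.monotone (by rw [Fin.le_def]; simpa using h)
        linarith [(hint i).2]
    rw [he, Fin.card_Ici]
    simp
  -- q sign at x i
  have hqsign : ∀ i : Fin n, 0 < (-1:ℝ)^(n - (i:ℕ)) * q.eval (x i) := by
    intro i
    have := aux_sign_prod z (x i) (hxz i)
    rwa [hfq i, ← hqe] at this
  have hfxpos : ∀ i : Fin n, 0 < f (x i) := fun i => hf _ (hxcd i)
  -- p vanishes at x i
  have hpx : ∀ i : Fin n, p.eval (x i) = 0 := by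
    intro i; rw [hpe]
    exact Finset.prod_eq_zero (Finset.mem_univ i) (by ring)
  -- g sign at x i
  have hgsign : ∀ i : Fin n, 0 < (-1:ℝ)^(n - (i:ℕ) + 1) * g.eval (x i) := by
    intro i
    have hid' := hid (x i)
    rw [hpx i] at hid'
    have h1 : 0 < (A - x i) * ((-1:ℝ)^(n - (i:ℕ)) * q.eval (x i)) :=
      mul_pos (by linarith [hxA i]) (hqsign i)
    have h2 : 0 < (-1:ℝ)^(n - (i:ℕ) + 1) * (f (x i) * g.eval (x i)) := by
      rw [hid', pow_succ]; ring_nf; ring_nf at h1; linarith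
    by_contra hc
    push_neg at hc
    nlinarith [hfxpos i]
  -- x i ≠ y j
  have hgx : ∀ i : Fin n, g.eval (x i) ≠ 0 := by
    intro i h0
    have h := hgsign i
    rw [h0] at h
    simp at h
  have hxy : ∀ i j : Fin n, x i ≠ y j := by
    intro i j h
    apply hgx i
    rw [hge]
    exact Finset.prod_eq_zero (Finset.mem_univ j) (by rw [h]; ring)
  -- count function
  set Cnt : ℕ → ℕ := fun k =>
    if h : k < n then (Finset.univ.filter (fun j : Fin n => x ⟨k, h⟩ < y j)).card else 0 with hCnt
  have hCval : ∀ i : Fin n, Cnt (i:ℕ) = (Finset.univ.filter (fun j : Fin n => x i < y j)).card := by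
    intro i; simp [hCnt, i.isLt]
  -- g sign via count
  have hgsign2 : ∀ i : Fin n, 0 < (-1:ℝ)^(Cnt (i:ℕ)) * g.eval (x i) := by
    intro i
    have := aux_sign_prod y (x i) (hxy i)
    rw [← hge] at this
    rwa [hCval i]
  have hpar : ∀ i : Fin n, Cnt (i:ℕ) % 2 = (n - (i:ℕ) + 1) % 2 :=
    fun i => aux_signs (hgsign2 i) (hgsign i)
  -- strict decrease
  have hdec : ∀ k, k + 1 < n → Cnt (k+1) < Cnt k := by
    intro k hk
    have hk' : k < n := Nat.lt_of_succ_lt hk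
    have hle : Cnt (k+1) ≤ Cnt k := by
      simp only [hCnt, dif_pos hk, dif_pos hk']
      apply Finset.card_le_card
      intro j hj
      simp only [Finset.mem_filter, Finset.mem_univ, true_and] at hj ⊢
      have : x ⟨k, hk'⟩ < x ⟨k+1, hk⟩ := hx (by simp [Fin.lt_def])
      linarith
    have hne : Cnt (k+1) ≠ Cnt k := by
      have p1 := hpar ⟨k, hk'⟩
      have p2 := hpar ⟨k+1, hk⟩
      simp only at p1 p2
      omega
    omega
  have hchain := aux_chain Cnt n hdec
  -- bound Cnt 0
  have hCbound : ∀ i : Fin n, Cnt (i:ℕ) ≤ n := by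
    intro i
    rw [hCval i]
    calc (Finset.univ.filter (fun j : Fin n => x i < y j)).card
        ≤ Finset.univ.card := Finset.card_filter_le _ _
      _ = n := by simp
  have hCeq : ∀ i : Fin n, Cnt (i:ℕ) = n - 1 - (i:ℕ) := by
    intro i
    have hn : 0 < n := i.pos
    have h0 : Cnt 0 ≤ n - 1 := by
      have hb := hCbound ⟨0, hn⟩
      have hp0 := hpar ⟨0, hn⟩
      simp only at hb hp0
      omega
    have hub := hchain 0 (i:ℕ) (Nat.zero_le _) i.isLt
    have hlb := hchain (i:ℕ) (n-1) (by omega) (by omega)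
    have hpl := hpar ⟨n-1, by omega⟩
    simp only at hpl
    omega
  constructor
  · intro i
    rcases lt_trichotomy (y i) (x i) with h | h | h
    · exact h
    · exact absurd h.symm (hxy i i)
    · exfalso
      have hsub : Finset.Ici i ⊆ Finset.univ.filter (fun j : Fin n => x i < y j) := by
        intro j hj
        simp only [Finset.mem_Ici] at hj
        simp only [Finset.mem_filter, Finset.mem_univ, true_and]
        exact lt_of_lt_of_le h (hy hj)
      have hcard := Finset.card_le_card hsub
      rw [Fin.card_Ici, ← hCval i, hCeq i] at hcard
      have := i.isLt
      omega
  · intro i hlt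
    rcases lt_trichotomy (x i) (y ⟨(i:ℕ)+1, hlt⟩) with h | h | h
    · exact h
    · exact absurd h (hxy i _)
    · exfalso
      have hsub : Finset.univ.filter (fun j : Fin n => x i < y j)
          ⊆ (Finset.Iic (⟨(i:ℕ)+1, hlt⟩ : Fin n))ᶜ := by
        intro j hj
        simp only [Finset.mem_filter, Finset.mem_univ, true_and] at hj
        simp only [Finset.mem_compl, Finset.mem_Iic]
        intro hle
        have : y j ≤ y ⟨(i:ℕ)+1, hlt⟩ := hy hle
        linarith
      have hcard := Finset.card_le_card hsub
      rw [Finset.card_compl, Fin.card_Iic, ← hCval i, hCeq i] at hcard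
      simp only [Fintype.card_fin] at hcard
      omega
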